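/- Fix θ ∈ (−1,0)∪(0,∞). For every probability distribution Q_Y on 𝒴 whose support contains the support of P_Y, one has H_{1+θ}(P_XY|Q_Y) ≤ H↑_{1+θ}(X|Y), and equality holds for Q_Y = P_Y^{(1+θ)}; in particular max over such Q_Y of H_{1+θ}(P_XY|Q_Y) equals H_{1+θ}(P_XY|P_Y^{(1+θ)}) = −((1+θ)/θ) log Σ_y [Σ_x P_XY(x,y)^{1+θ}]^{1/(1+θ)}. -/

import Mathlib

open Real Filter

/-- Marginal distribution on `𝒴`. -/
noncomputable def margY {𝒳 𝒴 : Type*} [Fintype 𝒳] (P : 𝒳 × 𝒴 → ℝ) (y : 𝒴) : ℝ :=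
  ∑ x : 𝒳, P (x, y)

/-- Conditional Rényi entropy of order `1+θ` relative to `Q`. -/
noncomputable def condRenyiQ {𝒳 𝒴 : Type*} [Fintype 𝒳] [Fintype 𝒴]
    (P : 𝒳 × 𝒴 → ℝ) (Q : 𝒴 → ℝ) (θ : ℝ) : ℝ :=
  -(1 / θ) * Real.log (∑ x : 𝒳, ∑ y : 𝒴,
    if 0 < P (x, y) then P (x, y) ^ (1 + θ) * Q y ^ (-θ) else 0)

/-- Upper conditional Rényi entropy `H↑_{1+θ}(X|Y)`. -/
noncomputable def condRenyiUp {𝒳 𝒴 : Type*} [Fintype 𝒳] [Fintype 𝒴]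
    (P : 𝒳 × 𝒴 → ℝ) (θ : ℝ) : ℝ :=
  -((1 + θ) / θ) * Real.log (∑ y : 𝒴, (∑ x : 𝒳, P (x, y) ^ (1 + θ)) ^ (1 / (1 + θ)))

/-- The optimizing distribution `P_Y^{(1+θ)}`. -/
noncomputable def tiltY {𝒳 𝒴 : Type*} [Fintype 𝒳] [Fintype 𝒴]
    (P : 𝒳 × 𝒴 → ℝ) (θ : ℝ) (y : 𝒴) : ℝ :=
  (∑ x : 𝒳, P (x, y) ^ (1 + θ)) ^ (1 / (1 + θ))
    / ∑ y' : 𝒴, (∑ x : 𝒳, P (x, y') ^ (1 + θ)) ^ (1 / (1 + θ))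

private lemma sum_guard_eq {𝒳 𝒴 : Type*} [Fintype 𝒳] [Fintype 𝒴]
    (P : 𝒳 × 𝒴 → ℝ) (hP0 : ∀ p, 0 ≤ P p) (Q : 𝒴 → ℝ) {θ : ℝ} (hp : 0 < 1 + θ) :
    (∑ x : 𝒳, ∑ y : 𝒴, if 0 < P (x, y) then P (x, y) ^ (1 + θ) * Q y ^ (-θ) else 0)
      = ∑ y : 𝒴, (∑ x : 𝒳, P (x, y) ^ (1 + θ)) * Q y ^ (-θ) := by
  rw [Finset.sum_comm]
  refine Finset.sum_congr rfl fun y _ => ?_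
  rw [Finset.sum_mul]
  refine Finset.sum_congr rfl fun x _ => ?_
  rcases (hP0 (x, y)).lt_or_eq with h | h
  · simp [h]
  · simp [← h, Real.zero_rpow hp.ne']

theorem condRenyiQ_le_condRenyiUp_and_eq {𝒳 𝒴 : Type*} [Fintype 𝒳] [Fintype 𝒴]
    (P : 𝒳 × 𝒴 → ℝ) (hP0 : ∀ p, 0 ≤ P p) (hP1 : ∑ p : 𝒳 × 𝒴, P p = 1)
    (θ : ℝ) (hθ : θ ∈ Set.Ioo (-1 : ℝ) 0 ∪ Set.Ioi 0) :
    (∀ Q : 𝒴 → ℝ, (∀ y, 0 ≤ Q y) → (∑ y : 𝒴, Q y = 1) →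
      (∀ y, 0 < margY P y → 0 < Q y) →
      condRenyiQ P Q θ ≤ condRenyiUp P θ)
    ∧ condRenyiQ P (tiltY P θ) θ = condRenyiUp P θ := by
  have hp : 0 < 1 + θ := by
    rcases hθ with ⟨h1, h2⟩ | h
    · linarith
    · have := Set.mem_Ioi.mp h; linarith
  have hθ0 : θ ≠ 0 := by
    rcases hθ with ⟨h1, h2⟩ | h
    · exact ne_of_lt h2
    · exact ne_of_gt (Set.mem_Ioi.mp h)
  have hS0 : ∀ y : 𝒴, 0 ≤ ∑ x : 𝒳, P (x, y) ^ (1 + θ) :=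
    fun y => Finset.sum_nonneg fun x _ => Real.rpow_nonneg (hP0 _) _
  -- existence of a positive entry
  obtain ⟨q0, hq0⟩ : ∃ q : 𝒳 × 𝒴, 0 < P q := by
    by_contra h
    push_neg at h
    have hz : ∑ p : 𝒳 × 𝒴, P p = 0 :=
      Finset.sum_eq_zero fun q _ => le_antisymm (h q) (hP0 q)
    rw [hP1] at hz
    exact one_ne_zero hz
  have hq0' : 0 < P (q0.1, q0.2) := by simpa using hq0
  have hSq : 0 < ∑ x : 𝒳, P (x, q0.2) ^ (1 + θ) :=
    lt_of_lt_of_le (Real.rpow_pos_of_pos hq0' _)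
      (Finset.single_le_sum (f := fun x : 𝒳 => P (x, q0.2) ^ (1 + θ))
        (fun x _ => Real.rpow_nonneg (hP0 _) _) (Finset.mem_univ q0.1))
  have hB0 : 0 < ∑ y : 𝒴, (∑ x : 𝒳, P (x, y) ^ (1 + θ)) ^ (1 / (1 + θ)) :=
    lt_of_lt_of_le (Real.rpow_pos_of_pos hSq _)
      (Finset.single_le_sum (f := fun y : 𝒴 => (∑ x : 𝒳, P (x, y) ^ (1 + θ)) ^ (1 / (1 + θ)))
        (fun y _ => Real.rpow_nonneg (hS0 _) _) (Finset.mem_univ q0.2))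
  -- support relation
  have hsupp : ∀ y : 𝒴, 0 < ∑ x : 𝒳, P (x, y) ^ (1 + θ) → 0 < margY P y := by
    intro y hy
    obtain ⟨x, _, hx⟩ := Finset.exists_lt_of_sum_lt (f := fun _ : 𝒳 => (0 : ℝ))
      (g := fun x : 𝒳 => P (x, y) ^ (1 + θ)) (by simpa using hy)
    have hPxy : 0 < P (x, y) := by
      rcases (hP0 (x, y)).lt_or_eq with h | h
      · exact h
      · rw [← h, Real.zero_rpow hp.ne'] at hx
        exact absurd hx (lt_irrefl 0)
    exact lt_of_lt_of_le hPxy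
      (Finset.single_le_sum (f := fun x' : 𝒳 => P (x', y)) (fun x' _ => hP0 (x', y))
        (Finset.mem_univ x))
  have hmargq : 0 < margY P q0.2 :=
    lt_of_lt_of_le hq0'
      (Finset.single_le_sum (f := fun x : 𝒳 => P (x, q0.2)) (fun x _ => hP0 (x, q0.2))
        (Finset.mem_univ q0.1))
  constructor
  · -- inequality for every admissible Q
    intro Q hQ0 hQ1 hQs
    -- abbreviations
    set S : 𝒴 → ℝ := fun y => ∑ x : 𝒳, P (x, y) ^ (1 + θ) with hS_def
    have hSzero : ∀ y, Q y = 0 → S y = 0 := by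
      intro y hq
      rcases (hS0 y).lt_or_eq with h | h
      · have := hQs y (hsupp y h)
        rw [hq] at this
        exact absurd this (lt_irrefl 0)
      · exact h.symm
    set z : 𝒴 → ℝ := fun y => if Q y = 0 then 0 else S y ^ (1 / (1 + θ)) / Q y with hz_def
    have hz0 : ∀ y, 0 ≤ z y := by
      intro y
      by_cases hq : Q y = 0
      · simp [hz_def, hq]
      · simp only [hz_def, hq, if_false]
        exact div_nonneg (Real.rpow_nonneg (hS0 y) _) (hQ0 y)
    have hQz : ∀ y, Q y * z y = S y ^ (1 / (1 + θ)) := by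
      intro y
      by_cases hq : Q y = 0
      · have hSy : S y = 0 := hSzero y hq
        simp [hz_def, hq, hSy, Real.zero_rpow (one_div_ne_zero hp.ne'), Real.zero_rpow (inv_ne_zero hp.ne')]
      · simp only [hz_def, hq, if_false]
        rw [mul_comm, div_mul_cancel₀ _ hq]
    have hQzp : ∀ y, Q y * z y ^ (1 + θ) = S y * Q y ^ (-θ) := by
      intro y
      by_cases hq : Q y = 0
      · have hSy : S y = 0 := hSzero y hq
        simp [hz_def, hq, hSy, Real.zero_rpow hp.ne']
      · have hqpos : 0 < Q y := lt_of_le_of_ne (hQ0 y) (Ne.symm hq)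
        simp only [hz_def, hq, if_false]
        rw [Real.div_rpow (Real.rpow_nonneg (hS0 y) _) (hQ0 y),
          ← Real.rpow_mul (hS0 y), one_div_mul_cancel hp.ne', Real.rpow_one]
        have hQθ : Q y ^ (-θ) = Q y / Q y ^ (1 + θ) := by
          rw [show (-θ) = 1 - (1 + θ) by ring, Real.rpow_sub hqpos, Real.rpow_one]
        rw [hQθ]
        ring
    have hsum1 : ∑ y : 𝒴, Q y * z y = ∑ y : 𝒴, S y ^ (1 / (1 + θ)) :=
      Finset.sum_congr rfl fun y _ => hQz y
    have hsum2 : ∑ y : 𝒴, Q y * z y ^ (1 + θ) = ∑ y : 𝒴, S y * Q y ^ (-θ) :=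
      Finset.sum_congr rfl fun y _ => hQzp y
    -- positivity of A
    have hA0 : 0 < ∑ y : 𝒴, S y * Q y ^ (-θ) := by
      have hQq : 0 < Q q0.2 := hQs q0.2 hmargq
      have hterm : 0 < S q0.2 * Q q0.2 ^ (-θ) :=
        mul_pos hSq (Real.rpow_pos_of_pos hQq _)
      exact lt_of_lt_of_le hterm
        (Finset.single_le_sum (f := fun y : 𝒴 => S y * Q y ^ (-θ))
          (fun y _ => mul_nonneg (hS0 y) (Real.rpow_nonneg (hQ0 y) _))
          (Finset.mem_univ q0.2))
    -- rewrite both sides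
    have hQform : condRenyiQ P Q θ = -(1 / θ) * Real.log (∑ y : 𝒴, S y * Q y ^ (-θ)) := by
      unfold condRenyiQ
      rw [sum_guard_eq P hP0 Q hp]
    have hUform : condRenyiUp P θ
        = -(1 / θ) * Real.log ((∑ y : 𝒴, S y ^ (1 / (1 + θ))) ^ (1 + θ)) := by
      unfold condRenyiUp
      rw [Real.log_rpow hB0]
      ring
    rw [hQform, hUform]
    rcases hθ with ⟨h1, h2⟩ | h
    · -- θ < 0 : concave Jensen gives A ≤ B^(1+θ)
      have hjen := (Real.concaveOn_rpow hp.le (by linarith)).le_map_sum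
        (t := Finset.univ) (w := Q) (p := z)
        (fun y _ => hQ0 y) hQ1 (fun y _ => Set.mem_Ici.mpr (hz0 y))
      simp only [smul_eq_mul] at hjen
      rw [hsum1, hsum2] at hjen
      have hlog : Real.log (∑ y : 𝒴, S y * Q y ^ (-θ))
          ≤ Real.log ((∑ y : 𝒴, S y ^ (1 / (1 + θ))) ^ (1 + θ)) :=
        Real.log_le_log hA0 hjen
      have hc : (0 : ℝ) ≤ -(1 / θ) := by
        rw [neg_nonneg]
        exact div_nonpos_of_nonneg_of_nonpos zero_le_one h2.le
      exact mul_le_mul_of_nonneg_left hlog hc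
    · -- θ > 0 : convex Jensen gives B^(1+θ) ≤ A
      have hθpos : 0 < θ := Set.mem_Ioi.mp h
      have hjen := Real.rpow_arith_mean_le_arith_mean_rpow Finset.univ Q z
        (fun y _ => hQ0 y) hQ1 (fun y _ => hz0 y) (by linarith : (1:ℝ) ≤ 1 + θ)
      rw [hsum1, hsum2] at hjen
      have hlog : Real.log ((∑ y : 𝒴, S y ^ (1 / (1 + θ))) ^ (1 + θ))
          ≤ Real.log (∑ y : 𝒴, S y * Q y ^ (-θ)) :=
        Real.log_le_log (Real.rpow_pos_of_pos hB0 _) hjen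
      have hc : -(1 / θ) ≤ 0 := by
        rw [neg_nonpos]
        positivity
      exact mul_le_mul_of_nonpos_left hlog hc
  · -- equality for the tilted distribution
    have hterm : ∀ y : 𝒴, (∑ x : 𝒳, P (x, y) ^ (1 + θ)) * tiltY P θ y ^ (-θ)
        = (∑ x : 𝒳, P (x, y) ^ (1 + θ)) ^ (1 / (1 + θ))
          * (∑ y' : 𝒴, (∑ x : 𝒳, P (x, y') ^ (1 + θ)) ^ (1 / (1 + θ))) ^ θ := by
      intro y
      rcases (hS0 y).lt_or_eq with h | h
      · rw [tiltY, Real.div_rpow (Real.rpow_nonneg (hS0 y) _) hB0.le,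
          ← Real.rpow_mul (hS0 y), Real.rpow_neg hB0.le, div_eq_mul_inv, inv_inv,
          ← mul_assoc]
        have hne : (1 + θ : ℝ) ≠ 0 := hp.ne'
        have h2 := Real.rpow_add h 1 (1 / (1 + θ) * -θ)
        rw [Real.rpow_one] at h2
        rw [← h2, show (1 : ℝ) + 1 / (1 + θ) * -θ = 1 / (1 + θ) by field_simp; ring]
      · rw [← h]
        simp [Real.zero_rpow hp.ne', Real.zero_rpow (one_div_ne_zero hp.ne'),
          Real.zero_rpow (inv_ne_zero hp.ne')]
    have hA : (∑ y : 𝒴, (∑ x : 𝒳, P (x, y) ^ (1 + θ)) * tiltY P θ y ^ (-θ))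
        = (∑ y : 𝒴, (∑ x : 𝒳, P (x, y) ^ (1 + θ)) ^ (1 / (1 + θ))) ^ (1 + θ) := by
      rw [Finset.sum_congr rfl fun y _ => hterm y, ← Finset.sum_mul,
        Real.rpow_add hB0, Real.rpow_one]
    unfold condRenyiQ condRenyiUp
    rw [sum_guard_eq P hP0 (tiltY P θ) hp, hA, Real.log_rpow hB0]
    ring
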